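/- arXiv:1510.07117 — 8 statements merged into one kernel-verified Lean document; each statement's English description precedes it below -/
import Mathlib

section
/- Let u : V → ℝ be a positive function. Then for every vertex x ∈ V, Γ(√u)(x)/u(x) − Δu(x)/(2u(x)) ≤ D_μ, where √u denotes the function x ↦ √(u(x)). -/
open Finset

/-- The μ-Laplacian on a finite weighted graph:
`Δf(x) = (1/μ(x)) ∑_y w(x,y) (f(y) - f(x))`. -/
noncomputable def graphLap {V : Type*} [Fintype V] (w : V → V → ℝ) (μ : V → ℝ)
    (f : V → ℝ) (x : V) : ℝ :=
  (1 / μ x) * ∑ y, w x y * (f y - f x)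

/-- The gradient form:
`Γ(f,g)(x) = (1/(2μ(x))) ∑_y w(x,y) (f(y) - f(x)) (g(y) - g(x))`. -/
noncomputable def graphGamma {V : Type*} [Fintype V] (w : V → V → ℝ) (μ : V → ℝ)
    (f g : V → ℝ) (x : V) : ℝ :=
  (1 / (2 * μ x)) * ∑ y, w x y * (f y - f x) * (g y - g x)

/-- Global gradient estimate: for a positive function `u` on a finite weighted graph,
`Γ(√u)(x)/u(x) - Δu(x)/(2u(x)) ≤ D_μ` where `D_μ = max_x deg(x)/μ(x)`. -/
theorem global_gradient_estimate {V : Type*} [Fintype V] [Nonempty V]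
    (w : V → V → ℝ) (hw : ∀ x y, 0 ≤ w x y) (hloop : ∀ x, w x x = 0)
    (μ : V → ℝ) (hμ : ∀ x, 0 < μ x)
    (u : V → ℝ) (hu : ∀ x, 0 < u x) (x : V) :
    graphGamma w μ (fun z => Real.sqrt (u z)) (fun z => Real.sqrt (u z)) x / u x
      - graphLap w μ u x / (2 * u x)
      ≤ Finset.univ.sup' Finset.univ_nonempty (fun z => (∑ y, w z y) / μ z) := by
  have hμx := hμ x
  have hux := hu x
  set d : ℝ := ∑ y, w x y with hd
  set S1 : ℝ := ∑ y, w x y * (Real.sqrt (u y) - Real.sqrt (u x)) *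
      (Real.sqrt (u y) - Real.sqrt (u x)) with hS1
  set S2 : ℝ := ∑ y, w x y * (u y - u x) with hS2
  have hsum : S1 - S2 ≤ 2 * u x * d := by
    rw [hS1, hS2, hd, ← Finset.sum_sub_distrib, Finset.mul_sum]
    apply Finset.sum_le_sum
    intro y _
    have h1 : Real.sqrt (u y) * Real.sqrt (u y) = u y := Real.mul_self_sqrt (hu y).le
    have h2 : Real.sqrt (u x) * Real.sqrt (u x) = u x := Real.mul_self_sqrt hux.le
    have h3 : 0 ≤ Real.sqrt (u y) * Real.sqrt (u x) :=
      mul_nonneg (Real.sqrt_nonneg _) (Real.sqrt_nonneg _)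
    have hwxy := hw x y
    nlinarith
  have hle : graphGamma w μ (fun z => Real.sqrt (u z)) (fun z => Real.sqrt (u z)) x / u x
      - graphLap w μ u x / (2 * u x) ≤ d / μ x := by
    have heq : graphGamma w μ (fun z => Real.sqrt (u z)) (fun z => Real.sqrt (u z)) x / u x
        - graphLap w μ u x / (2 * u x) = (S1 - S2) / (2 * μ x * u x) := by
      unfold graphGamma graphLap
      rw [← hS1, ← hS2]
      field_simp
    rw [heq, div_le_div_iff₀ (by positivity) hμx]
    nlinarith
  exact hle.trans (Finset.le_sup' (fun z => (∑ y, w z y) / μ z) (Finset.mem_univ x))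
end

section
/- Let u : V → ℝ be a positive function. Then for every vertex x ∈ V, the pointwise estimate Γ(√u)(x)/u(x) − Δu(x)/(2u(x)) ≤ deg(x)/μ(x) holds, where √u denotes the function x ↦ √(u(x)). -/
open Finset

/-- Pointwise gradient estimate: for a positive function `u` on a finite weighted graph,
`Γ(√u)(x)/u(x) - Δu(x)/(2u(x)) ≤ deg(x)/μ(x)`. -/
theorem pointwise_gradient_estimate {V : Type*} [Fintype V] [Nonempty V]
    (w : V → V → ℝ) (hw : ∀ x y, 0 ≤ w x y) (hloop : ∀ x, w x x = 0)
    (μ : V → ℝ) (hμ : ∀ x, 0 < μ x)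
    (u : V → ℝ) (hu : ∀ x, 0 < u x) (x : V) :
    graphGamma w μ (fun z => Real.sqrt (u z)) (fun z => Real.sqrt (u z)) x / u x
      - graphLap w μ u x / (2 * u x)
      ≤ (∑ y, w x y) / μ x := by
  have hμx := hμ x
  have hux := hu x
  have key : (∑ y, w x y * (Real.sqrt (u y) - Real.sqrt (u x)) * (Real.sqrt (u y) - Real.sqrt (u x)))
      - (∑ y, w x y * (u y - u x)) ≤ 2 * u x * ∑ y, w x y := by
    rw [← Finset.sum_sub_distrib, Finset.mul_sum]
    refine Finset.sum_le_sum fun y _ => ?_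
    have h1 : Real.sqrt (u y) * Real.sqrt (u y) = u y := Real.mul_self_sqrt (hu y).le
    have h2 : Real.sqrt (u x) * Real.sqrt (u x) = u x := Real.mul_self_sqrt (hu x).le
    have h3 : 0 ≤ Real.sqrt (u y) * Real.sqrt (u x) :=
      mul_nonneg (Real.sqrt_nonneg _) (Real.sqrt_nonneg _)
    nlinarith [hw x y, mul_nonneg (hw x y) h3]
  simp only [graphGamma, graphLap]
  have hμne : μ x ≠ 0 := hμx.ne'
  set S1 := ∑ y, w x y * (Real.sqrt (u y) - Real.sqrt (u x)) * (Real.sqrt (u y) - Real.sqrt (u x)) with hS1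
  set S2 := ∑ y, w x y * (u y - u x) with hS2
  set D := ∑ y, w x y with hD
  rw [div_sub_div _ _ hux.ne' (by positivity), div_le_div_iff₀ (by positivity) hμx]
  calc (1 / (2 * μ x) * S1 * (2 * u x) - u x * (1 / μ x * S2)) * μ x
      = u x * (S1 - S2) := by field_simp
    _ ≤ u x * (2 * u x * D) := mul_le_mul_of_nonneg_left key hux.le
    _ = D * (u x * (2 * u x)) := by ring
end

section
/- Let u : V × ℝ → ℝ be a positive function such that for every x ∈ V the map t ↦ u(x,t) is differentiable and Δu(·,t)(x) = ∂_t u(x,t) for all t (i.e., u is a positive solution to the heat equation). Then for every x ∈ V and every t ∈ ℝ, Γ(√u(·,t))(x)/u(x,t) − (∂_t √(u(x,t)))/√(u(x,t)) ≤ D_μ, where ∂_t √(u(x,t)) denotes the derivative of the map t ↦ √(u(x,t)) (equivalently, this quotient equals ∂_t u(x,t)/(2u(x,t))). -/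
open Finset

/-- Gradient estimate for positive solutions of the heat equation:
if `Δu(·,t)(x) = ∂_t u(x,t)` for all `x` and `t`, then
`Γ(√u(·,t))(x)/u(x,t) - (∂_t √(u(x,t)))/√(u(x,t)) ≤ D_μ`. -/
theorem gradient_estimate_heat_solution {V : Type*} [Fintype V] [Nonempty V]
    (w : V → V → ℝ) (hw : ∀ x y, 0 ≤ w x y) (hloop : ∀ x, w x x = 0)
    (μ : V → ℝ) (hμ : ∀ x, 0 < μ x)
    (u : V → ℝ → ℝ) (hu : ∀ x t, 0 < u x t)
    (hdiff : ∀ x, Differentiable ℝ (u x))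
    (hheat : ∀ x t, graphLap w μ (fun z => u z t) x = deriv (u x) t)
    (x : V) (t : ℝ) :
    graphGamma w μ (fun z => Real.sqrt (u z t)) (fun z => Real.sqrt (u z t)) x / u x t
      - deriv (fun s => Real.sqrt (u x s)) t / Real.sqrt (u x t)
      ≤ Finset.univ.sup' Finset.univ_nonempty (fun z => (∑ y, w z y) / μ z) := by
  have hux : 0 < u x t := hu x t
  have hsx : 0 < Real.sqrt (u x t) := Real.sqrt_pos.mpr hux
  have hμx : 0 < μ x := hμ x
  -- derivative of sqrt composed with u x
  have hd : deriv (fun s => Real.sqrt (u x s)) t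
      = deriv (u x) t / (2 * Real.sqrt (u x t)) :=
    (((hdiff x t).hasDerivAt).sqrt (ne_of_gt hux)).deriv
  have hterm2 : deriv (fun s => Real.sqrt (u x s)) t / Real.sqrt (u x t)
      = graphLap w μ (fun z => u z t) x / (2 * u x t) := by
    rw [hd, hheat x t]
    rw [div_div, mul_assoc, Real.mul_self_sqrt hux.le]
  rw [hterm2]
  -- combine into one fraction and bound
  have key : graphGamma w μ (fun z => Real.sqrt (u z t)) (fun z => Real.sqrt (u z t)) x / u x t
      - graphLap w μ (fun z => u z t) x / (2 * u x t)
      ≤ (∑ y, w x y) / μ x := by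
    have hsum : ∀ y, w x y * (Real.sqrt (u y t) - Real.sqrt (u x t))
          * (Real.sqrt (u y t) - Real.sqrt (u x t))
          - w x y * (u y t - u x t) ≤ w x y * (2 * u x t) := by
      intro y
      have h1 : (Real.sqrt (u y t) - Real.sqrt (u x t))
          * (Real.sqrt (u y t) - Real.sqrt (u x t)) - (u y t - u x t)
          ≤ 2 * u x t := by
        have e1 : Real.sqrt (u y t) * Real.sqrt (u y t) = u y t :=
          Real.mul_self_sqrt (hu y t).le
        have e2 : Real.sqrt (u x t) * Real.sqrt (u x t) = u x t :=
          Real.mul_self_sqrt hux.le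
        nlinarith [mul_nonneg (Real.sqrt_nonneg (u y t)) (Real.sqrt_nonneg (u x t))]
      calc w x y * (Real.sqrt (u y t) - Real.sqrt (u x t))
            * (Real.sqrt (u y t) - Real.sqrt (u x t)) - w x y * (u y t - u x t)
          = w x y * ((Real.sqrt (u y t) - Real.sqrt (u x t))
            * (Real.sqrt (u y t) - Real.sqrt (u x t)) - (u y t - u x t)) := by ring
        _ ≤ w x y * (2 * u x t) := mul_le_mul_of_nonneg_left h1 (hw x y)
    unfold graphGamma graphLap
    rw [div_sub_div _ _ (ne_of_gt hux) (by positivity : (2 : ℝ) * u x t ≠ 0)]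
    rw [div_le_div_iff₀ (by positivity) hμx]
    have hS : (∑ y, w x y * (Real.sqrt (u y t) - Real.sqrt (u x t))
          * (Real.sqrt (u y t) - Real.sqrt (u x t)))
          - (∑ y, w x y * (u y t - u x t)) ≤ (∑ y, w x y) * (2 * u x t) := by
      rw [← Finset.sum_sub_distrib, Finset.sum_mul]
      exact Finset.sum_le_sum fun y _ => hsum y
    set S1 := ∑ y, w x y * (Real.sqrt (u y t) - Real.sqrt (u x t))
        * (Real.sqrt (u y t) - Real.sqrt (u x t)) with hS1
    set S2 := ∑ y, w x y * (u y t - u x t) with hS2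
    have hE : ((1 / (2 * μ x) * S1) * (2 * u x t) - u x t * (1 / μ x * S2)) * μ x
        = (S1 - S2) * u x t := by
      field_simp
    show ((1 / (2 * μ x) * S1) * (2 * u x t) - u x t * (1 / μ x * S2)) * μ x
        ≤ (∑ y, w x y) * (u x t * (2 * u x t))
    rw [hE]
    nlinarith [mul_le_mul_of_nonneg_right hS hux.le]
  refine key.trans ?_
  exact Finset.le_sup' (fun z => (∑ y, w z y) / μ z) (Finset.mem_univ x)
end

section
/- Assume the weights are symmetric (w(x,y) = w(y,x)) and the graph with adjacency x ∼ y iff x ≠ y and w(x,y) > 0 is connected. Let u : V × ℝ → ℝ be a positive function, differentiable in t, satisfying Δu(·,t)(x) = ∂_t u(x,t) for all x ∈ V and all t ≥ 0 (a positive solution to the heat equation). Then for all x, y ∈ V and all 0 ≤ T₁ < T₂: u(x,T₁) ≤ u(y,T₂) · exp{ 2D_μ(T₂−T₁) + (4μ_max/w_min) · (dist(x,y))²/(T₂−T₁) }, where dist(x,y) is the graph distance. -/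
open Finset

set_option maxHeartbeats 2000000 in
/-- Harnack inequality for positive solutions of the heat equation on a finite
connected weighted graph: for `0 ≤ T₁ < T₂`,
`u(x,T₁) ≤ u(y,T₂) exp{2D_μ(T₂-T₁) + (4μ_max/w_min) dist(x,y)²/(T₂-T₁)}`. -/
theorem harnack_inequality {V : Type*} [Fintype V] [Nonempty V]
    (w : V → V → ℝ) (hw : ∀ x y, 0 ≤ w x y) (hloop : ∀ x, w x x = 0)
    (hsymm : ∀ x y, w x y = w y x)
    (μ : V → ℝ) (hμ : ∀ x, 0 < μ x)
    (G : SimpleGraph V) (hadj : ∀ x y, G.Adj x y ↔ x ≠ y ∧ 0 < w x y)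
    (hconn : G.Connected)
    (u : V → ℝ → ℝ) (hu : ∀ x t, 0 < u x t)
    (hdiff : ∀ x, Differentiable ℝ (u x))
    (hheat : ∀ x t, 0 ≤ t → graphLap w μ (fun z => u z t) x = deriv (u x) t)
    (Dμ μmax wmin : ℝ)
    (hDμ : Dμ = Finset.univ.sup' Finset.univ_nonempty (fun z => (∑ y, w z y) / μ z))
    (hμmax : μmax = Finset.univ.sup' Finset.univ_nonempty μ)
    (hwmin : IsLeast {r : ℝ | ∃ x y, 0 < w x y ∧ w x y = r} wmin)
    (x y : V) (T₁ T₂ : ℝ) (hT₁ : 0 ≤ T₁) (hT : T₁ < T₂) :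
    u x T₁ ≤ u y T₂ * Real.exp (2 * Dμ * (T₂ - T₁)
      + (4 * μmax / wmin) * (G.dist x y : ℝ) ^ 2 / (T₂ - T₁)) := by
  have hτ : (0:ℝ) < T₂ - T₁ := sub_pos.mpr hT
  -- basic positivity facts
  obtain ⟨⟨a0, b0, hab0, hab0'⟩, hwlb⟩ := hwmin
  have hwmin_pos : 0 < wmin := hab0' ▸ hab0
  have hμmax_le : ∀ z, μ z ≤ μmax := fun z => hμmax ▸ Finset.le_sup' μ (mem_univ z)
  have hμmax_pos : 0 < μmax := lt_of_lt_of_le (hμ (Classical.arbitrary V)) (hμmax_le _)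
  have hDμ_le : ∀ z, (∑ y, w z y) / μ z ≤ Dμ := fun z =>
    hDμ ▸ Finset.le_sup' (fun z => (∑ y, w z y) / μ z) (mem_univ z)
  have hDμ_nonneg : 0 ≤ Dμ := by
    refine le_trans ?_ (hDμ_le (Classical.arbitrary V))
    exact div_nonneg (Finset.sum_nonneg fun _ _ => hw _ _) (hμ _).le
  -- generic lower bound for the Laplacian of a nonnegative function
  have lap_ge : ∀ (z : V) (f : V → ℝ), (∀ v, 0 ≤ f v) → ∀ S0, S0 ≤ ∑ y', w z y' * f y' →
      (1 / μ z) * S0 - Dμ * f z ≤ graphLap w μ f z := by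
    intro z f hf S0 hS0
    unfold graphLap
    have h2 : ∑ y', w z y' * (f y' - f z)
        = (∑ y', w z y' * f y') - (∑ y', w z y') * f z := by
      rw [Finset.sum_mul, ← Finset.sum_sub_distrib]
      exact Finset.sum_congr rfl fun _ _ => by ring
    rw [h2, mul_sub]
    have hA : (1 / μ z) * S0 ≤ (1 / μ z) * (∑ y', w z y' * f y') :=
      mul_le_mul_of_nonneg_left hS0 (one_div_nonneg.mpr (hμ z).le)
    have hB : (1 / μ z) * ((∑ y', w z y') * f z) ≤ Dμ * f z := by
      rw [← mul_assoc]
      refine mul_le_mul_of_nonneg_right ?_ (hf z)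
      calc 1 / μ z * ∑ y', w z y' = (∑ y', w z y') / μ z := by ring
        _ ≤ Dμ := hDμ_le z
    linarith
  -- exp(Dμ t) * u z t is monotone on [0, ∞)
  have gmono : ∀ z : V, MonotoneOn (fun t => Real.exp (Dμ * t) * u z t) (Set.Ici 0) := by
    intro z
    have hdg : Differentiable ℝ (fun t => Real.exp (Dμ * t) * u z t) :=
      (Real.differentiable_exp.comp ((differentiable_const Dμ).mul differentiable_id)).mul
        (hdiff z)
    have hder : ∀ t : ℝ, HasDerivAt (fun t => Real.exp (Dμ * t) * u z t)
        (Real.exp (Dμ * t) * Dμ * u z t + Real.exp (Dμ * t) * deriv (u z) t) t := by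
      intro t
      have h1 : HasDerivAt (fun t : ℝ => Dμ * t) Dμ t := by
        simpa using (hasDerivAt_id t).const_mul Dμ
      exact h1.exp.mul ((hdiff z) t).hasDerivAt
    refine monotoneOn_of_deriv_nonneg (convex_Ici 0) hdg.continuous.continuousOn
      hdg.differentiableOn ?_
    intro t ht
    rw [interior_Ici] at ht
    have ht0 : (0:ℝ) ≤ t := le_of_lt ht
    rw [(hder t).deriv]
    have hlap := lap_ge z (fun v => u v t) (fun v => (hu v t).le) 0
      (Finset.sum_nonneg fun v _ => mul_nonneg (hw _ _) (hu v t).le)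
    rw [hheat z t ht0] at hlap
    simp only [mul_zero, zero_sub] at hlap
    nlinarith [Real.exp_pos (Dμ * t), hu z t]
  -- the vertex estimate
  have vertex : ∀ (z : V) (t1 t2 : ℝ), 0 ≤ t1 → t1 ≤ t2 →
      u z t1 ≤ u z t2 * Real.exp (Dμ * (t2 - t1)) := by
    intro z t1 t2 ht1 h12
    have hm := gmono z (Set.mem_Ici.mpr ht1) (Set.mem_Ici.mpr (ht1.trans h12)) h12
    simp only at hm
    have key : Real.exp (Dμ * t2) = Real.exp (Dμ * (t2 - t1)) * Real.exp (Dμ * t1) := by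
      rw [← Real.exp_add]; ring_nf
    rw [key] at hm
    nlinarith [Real.exp_pos (Dμ * t1), hu z t1, hu z t2]
  -- the edge estimate
  have edge : ∀ (a b : V), 0 < w a b → ∀ (t1 t2 : ℝ), 0 ≤ t1 → t1 < t2 →
      u a t1 ≤ u b t2 * Real.exp (2 * Dμ * (t2 - t1) + 4 * μmax / (wmin * (t2 - t1))) := by
    intro a b hwab t1 t2 ht1 h12
    have hδ : (0:ℝ) < t2 - t1 := sub_pos.mpr h12
    set c : ℝ := wmin / μmax with hc
    have hcpos : 0 < c := div_pos hwmin_pos hμmax_pos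
    set C : ℝ := c * (Real.exp (Dμ * t1) * u a t1) with hC
    -- h t = exp(Dμ t) u b t - C (t - t1) is monotone on [t1, ∞)
    have hmono : MonotoneOn (fun t => Real.exp (Dμ * t) * u b t - C * (t - t1))
        (Set.Ici t1) := by
      have hdg : Differentiable ℝ (fun t => Real.exp (Dμ * t) * u b t - C * (t - t1)) :=
        ((Real.differentiable_exp.comp ((differentiable_const Dμ).mul differentiable_id)).mul
          (hdiff b)).sub ((differentiable_id.sub_const t1).const_mul C)
      refine monotoneOn_of_deriv_nonneg (convex_Ici t1) hdg.continuous.continuousOn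
        hdg.differentiableOn ?_
      intro t ht
      rw [interior_Ici] at ht
      have ht0 : (0:ℝ) ≤ t := ht1.trans (le_of_lt ht)
      have hder : HasDerivAt (fun t => Real.exp (Dμ * t) * u b t - C * (t - t1))
          (Real.exp (Dμ * t) * Dμ * u b t + Real.exp (Dμ * t) * deriv (u b) t - C * 1) t := by
        have h1 : HasDerivAt (fun t : ℝ => Dμ * t) Dμ t := by
          simpa using (hasDerivAt_id t).const_mul Dμ
        exact (h1.exp.mul ((hdiff b) t).hasDerivAt).sub
          (((hasDerivAt_id t).sub_const t1).const_mul C)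
      rw [hder.deriv]
      have hwba : 0 < w b a := by rw [← hsymm]; exact hwab
      have hS : w b a * u a t ≤ ∑ y', w b y' * u y' t :=
        Finset.single_le_sum (f := fun v => w b v * u v t)
          (fun v _ => mul_nonneg (hw _ _) (hu v t).le) (mem_univ a)
      have hlap := lap_ge b (fun v => u v t) (fun v => (hu v t).le) (w b a * u a t) hS
      rw [hheat b t ht0] at hlap
      have hce : c * u a t ≤ (1 / μ b) * (w b a * u a t) := by
        have h1 : wmin ≤ w b a := hwlb ⟨b, a, hwba, rfl⟩
        have h2 : 1 / μmax ≤ 1 / μ b := one_div_le_one_div_of_le (hμ b) (hμmax_le b)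
        calc c * u a t = (1 / μmax) * (wmin * u a t) := by rw [hc]; ring
          _ ≤ (1 / μ b) * (wmin * u a t) :=
              mul_le_mul_of_nonneg_right h2 (mul_nonneg hwmin_pos.le (hu a t).le)
          _ ≤ (1 / μ b) * (w b a * u a t) :=
              mul_le_mul_of_nonneg_left
                (mul_le_mul_of_nonneg_right h1 (hu a t).le) (one_div_nonneg.mpr (hμ b).le)
      have hga := gmono a (Set.mem_Ici.mpr ht1) (Set.mem_Ici.mpr ht0) (le_of_lt ht)
      simp only at hga
      have hexp := Real.exp_pos (Dμ * t)
      have h3 : c * u a t - Dμ * u b t ≤ deriv (u b) t := by linarith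
      have h4 : Real.exp (Dμ * t) * (c * u a t - Dμ * u b t)
          ≤ Real.exp (Dμ * t) * deriv (u b) t := mul_le_mul_of_nonneg_left h3 hexp.le
      have h5 : c * (Real.exp (Dμ * t1) * u a t1) ≤ c * (Real.exp (Dμ * t) * u a t) :=
        mul_le_mul_of_nonneg_left hga hcpos.le
      nlinarith [h4, h5]
    -- evaluate monotonicity between t1 and t2
    have hm := hmono (Set.mem_Ici.mpr (le_refl t1)) (Set.mem_Ici.mpr h12.le) h12.le
    simp only at hm
    have key : Real.exp (Dμ * t2) = Real.exp (Dμ * (t2 - t1)) * Real.exp (Dμ * t1) := by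
      rw [← Real.exp_add]; ring_nf
    rw [key] at hm
    have hstep : C * (t2 - t1)
        ≤ Real.exp (Dμ * (t2 - t1)) * Real.exp (Dμ * t1) * u b t2 := by
      nlinarith [hm, mul_pos (Real.exp_pos (Dμ * t1)) (hu b t1)]
    rw [hC] at hstep
    have h7 : (c * (t2 - t1) * u a t1) * Real.exp (Dμ * t1)
        ≤ (Real.exp (Dμ * (t2 - t1)) * u b t2) * Real.exp (Dμ * t1) := by
      nlinarith [hstep]
    have h8 : c * (t2 - t1) * u a t1 ≤ Real.exp (Dμ * (t2 - t1)) * u b t2 :=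
      le_of_mul_le_mul_right h7 (Real.exp_pos (Dμ * t1))
    have hcd : 0 < c * (t2 - t1) := mul_pos hcpos hδ
    have h9 : u a t1 ≤ (Real.exp (Dμ * (t2 - t1)) * u b t2) / (c * (t2 - t1)) := by
      rw [le_div_iff₀ hcd]; nlinarith [h8]
    have hsub : (Real.exp (Dμ * (t2 - t1)) * u b t2) / (c * (t2 - t1))
        = Real.exp (Dμ * (t2 - t1)) * u b t2 * (μmax / (wmin * (t2 - t1))) := by
      rw [hc]; field_simp
    rw [hsub] at h9
    set s : ℝ := μmax / (wmin * (t2 - t1)) with hs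
    have hspos : 0 < s := div_pos hμmax_pos (mul_pos hwmin_pos hδ)
    have h10 : s ≤ Real.exp (4 * μmax / (wmin * (t2 - t1))) := by
      have h4s : 4 * μmax / (wmin * (t2 - t1)) = 4 * s := by rw [hs]; ring
      calc s ≤ s + 1 := by linarith
        _ ≤ Real.exp s := Real.add_one_le_exp s
        _ ≤ Real.exp (4 * μmax / (wmin * (t2 - t1))) := by
            rw [h4s]; exact Real.exp_le_exp.mpr (by linarith)
    calc u a t1 ≤ Real.exp (Dμ * (t2 - t1)) * u b t2 * s := h9
      _ ≤ Real.exp (Dμ * (t2 - t1)) * u b t2 * Real.exp (4 * μmax / (wmin * (t2 - t1))) :=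
          mul_le_mul_of_nonneg_left h10 (mul_pos (Real.exp_pos _) (hu b t2)).le
      _ ≤ Real.exp (2 * Dμ * (t2 - t1)) * u b t2 * Real.exp (4 * μmax / (wmin * (t2 - t1))) := by
          have : Real.exp (Dμ * (t2 - t1)) ≤ Real.exp (2 * Dμ * (t2 - t1)) :=
            Real.exp_le_exp.mpr (by nlinarith)
          exact mul_le_mul_of_nonneg_right
            (mul_le_mul_of_nonneg_right this (hu b t2).le) (Real.exp_pos _).le
      _ = u b t2 * Real.exp (2 * Dμ * (t2 - t1) + 4 * μmax / (wmin * (t2 - t1))) := by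
          rw [Real.exp_add]; ring
  -- chaining along a walk
  have chain : ∀ (δ : ℝ), 0 < δ → ∀ (a b : V) (p : G.Walk a b) (t1 : ℝ), 0 ≤ t1 →
      u a t1 ≤ u b (t1 + p.length * δ) *
        Real.exp (p.length * (2 * Dμ * δ + 4 * μmax / (wmin * δ))) := by
    intro δ hδ a b p
    induction p with
    | nil => intro t1 ht1; simp
    | @cons a a' b h q ih =>
      intro t1 ht1
      have hwa : 0 < w a a' := ((hadj a a').mp h).2
      have e1 : u a t1 ≤ u a' (t1 + δ) * Real.exp (2 * Dμ * δ + 4 * μmax / (wmin * δ)) := by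
        have := edge a a' hwa t1 (t1 + δ) ht1 (by linarith)
        simpa using this
      have e2 := ih (t1 + δ) (by linarith)
      have hlen : ((SimpleGraph.Walk.cons h q).length : ℝ) = (q.length : ℝ) + 1 := by
        rw [SimpleGraph.Walk.length_cons]; push_cast; ring
      rw [hlen]
      have htime : t1 + ((q.length : ℝ) + 1) * δ = (t1 + δ) + (q.length : ℝ) * δ := by ring
      rw [htime]
      calc u a t1 ≤ u a' (t1 + δ) * Real.exp (2 * Dμ * δ + 4 * μmax / (wmin * δ)) := e1
        _ ≤ (u b ((t1 + δ) + (q.length : ℝ) * δ) *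
              Real.exp ((q.length : ℝ) * (2 * Dμ * δ + 4 * μmax / (wmin * δ)))) *
              Real.exp (2 * Dμ * δ + 4 * μmax / (wmin * δ)) :=
            mul_le_mul_of_nonneg_right e2 (Real.exp_pos _).le
        _ = u b ((t1 + δ) + (q.length : ℝ) * δ) *
              Real.exp (((q.length : ℝ) + 1) * (2 * Dμ * δ + 4 * μmax / (wmin * δ))) := by
            rw [mul_assoc, ← Real.exp_add]; ring_nf
  -- conclusion
  by_cases hxy : x = y
  · subst hxy
    have hd : G.dist x x = 0 := SimpleGraph.dist_self
    rw [hd]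
    have := vertex x T₁ T₂ hT₁ hT.le
    calc u x T₁ ≤ u x T₂ * Real.exp (Dμ * (T₂ - T₁)) := this
      _ ≤ u x T₂ * Real.exp (2 * Dμ * (T₂ - T₁)
            + 4 * μmax / wmin * ((0:ℕ) : ℝ) ^ 2 / (T₂ - T₁)) := by
          refine mul_le_mul_of_nonneg_left (Real.exp_le_exp.mpr ?_) (hu x T₂).le
          push_cast
          have h00 : (0:ℝ) ≤ Dμ * (T₂ - T₁) := mul_nonneg hDμ_nonneg hτ.le
          have h01 : 4 * μmax / wmin * (0:ℝ) ^ 2 / (T₂ - T₁) = 0 := by ring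
          rw [h01] at *
          linarith
  · -- positive distance case
    obtain ⟨p, hp⟩ := hconn.exists_walk_length_eq_dist x y
    have hdpos : 0 < G.dist x y := hconn.pos_dist_of_ne hxy
    set d : ℕ := G.dist x y with hd
    have hdR : (0:ℝ) < (d : ℝ) := by exact_mod_cast hdpos
    set δ : ℝ := (T₂ - T₁) / d with hδdef
    have hδ : 0 < δ := div_pos hτ hdR
    have hc := chain δ hδ x y p T₁ hT₁
    rw [hp] at hc
    have htime : T₁ + (d : ℝ) * δ = T₂ := by
      rw [hδdef]; field_simp; ring
    rw [htime] at hc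
    have hexps : (d : ℝ) * (2 * Dμ * δ + 4 * μmax / (wmin * δ))
        = 2 * Dμ * (T₂ - T₁) + 4 * μmax / wmin * (d : ℝ) ^ 2 / (T₂ - T₁) := by
      rw [hδdef]
      field_simp
    rw [hexps] at hc
    exact hc
end

section
/- Assume the weights are symmetric (w(x,y) = w(y,x)). Let u : V × ℝ → ℝ be a positive function, differentiable in t, satisfying Δu(·,t)(x) = ∂_t u(x,t) for all x ∈ V and all t ≥ 0. Then for any adjacent vertices x ∼ y (i.e., w(x,y) > 0) and any 0 ≤ T₁ < T₂: u(x,T₁) ≤ u(y,T₂) · exp{ 2D_μ(T₂−T₁) + (4μ_max/w_min) · 1/(T₂−T₁) }. -/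
open Finset

/-- Harnack inequality for adjacent vertices: if `x ∼ y` and `0 ≤ T₁ < T₂`, then
`u(x,T₁) ≤ u(y,T₂) exp{2D_μ(T₂-T₁) + (4μ_max/w_min)/(T₂-T₁)}`. -/
theorem harnack_adjacent {V : Type*} [Fintype V] [Nonempty V]
    (w : V → V → ℝ) (hw : ∀ x y, 0 ≤ w x y) (hloop : ∀ x, w x x = 0)
    (hsymm : ∀ x y, w x y = w y x)
    (μ : V → ℝ) (hμ : ∀ x, 0 < μ x)
    (u : V → ℝ → ℝ) (hu : ∀ x t, 0 < u x t)
    (hdiff : ∀ x, Differentiable ℝ (u x))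
    (hheat : ∀ x t, 0 ≤ t → graphLap w μ (fun z => u z t) x = deriv (u x) t)
    (Dμ μmax wmin : ℝ)
    (hDμ : Dμ = Finset.univ.sup' Finset.univ_nonempty (fun z => (∑ y, w z y) / μ z))
    (hμmax : μmax = Finset.univ.sup' Finset.univ_nonempty μ)
    (hwmin : IsLeast {r : ℝ | ∃ x y, 0 < w x y ∧ w x y = r} wmin)
    (x y : V) (hxy : 0 < w x y)
    (T₁ T₂ : ℝ) (hT₁ : 0 ≤ T₁) (hT : T₁ < T₂) :
    u x T₁ ≤ u y T₂ * Real.exp (2 * Dμ * (T₂ - T₁)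
      + (4 * μmax / wmin) * (1 / (T₂ - T₁))) := by
  have hΔ : (0:ℝ) < T₂ - T₁ := sub_pos.mpr hT
  -- basic positivity facts
  have hwmin_pos : 0 < wmin := by
    obtain ⟨⟨a, b, hab, habw⟩, -⟩ := hwmin
    exact habw ▸ hab
  have hwmin_le : wmin ≤ w y x := hwmin.2 ⟨y, x, by rwa [← hsymm], rfl⟩
  have hμmax_ge : ∀ z, μ z ≤ μmax := fun z => hμmax ▸ Finset.le_sup' μ (mem_univ z)
  have hμmax_pos : 0 < μmax := lt_of_lt_of_le (hμ (Classical.arbitrary V)) (hμmax_ge _)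
  have hDμ_ge : ∀ z, (∑ y, w z y) / μ z ≤ Dμ := fun z =>
    hDμ ▸ Finset.le_sup' (fun z => (∑ y, w z y) / μ z) (mem_univ z)
  have hDμ0 : 0 ≤ Dμ :=
    le_trans (div_nonneg (Finset.sum_nonneg fun z _ => hw x z) (hμ x).le) (hDμ_ge x)
  -- key derivative lower bound
  have hderiv_ge : ∀ a b t, 0 ≤ t →
      w a b * u b t / μ a - Dμ * u a t ≤ deriv (u a) t := by
    intro a b t ht
    rw [← hheat a t ht]
    unfold graphLap
    have hsum : ∑ z, w a z * (u z t - u a t)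
        = (∑ z, w a z * u z t) - (∑ z, w a z) * u a t := by
      simp only [mul_sub]
      rw [Finset.sum_sub_distrib, ← Finset.sum_mul]
    rw [hsum, mul_sub]
    have h1 : w a b * u b t / μ a ≤ (1 / μ a) * ∑ z, w a z * u z t := by
      rw [div_eq_mul_inv, one_div, mul_comm (w a b * u b t)]
      apply mul_le_mul_of_nonneg_left _ (inv_nonneg.mpr (hμ a).le)
      exact Finset.single_le_sum (fun z _ => mul_nonneg (hw a z) (hu z t).le) (mem_univ b)
    have h2 : (1 / μ a) * ((∑ z, w a z) * u a t) ≤ Dμ * u a t := by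
      rw [← mul_assoc, one_div, inv_mul_eq_div]
      exact mul_le_mul_of_nonneg_right (hDμ_ge a) (hu a t).le
    linarith
  -- derivative of t ↦ u a t * exp (Dμ * t)
  have hgd : ∀ a t, HasDerivAt (fun s => u a s * Real.exp (Dμ * s))
      ((deriv (u a) t + Dμ * u a t) * Real.exp (Dμ * t)) t := by
    intro a t
    have h1 : HasDerivAt (u a) (deriv (u a) t) t := (hdiff a t).hasDerivAt
    have h2 : HasDerivAt (fun s : ℝ => Real.exp (Dμ * s)) (Real.exp (Dμ * t) * Dμ) t :=
      (Real.hasDerivAt_exp (Dμ * t)).comp t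
        (by simpa using (hasDerivAt_id t).const_mul Dμ)
    have := h1.mul h2
    refine this.congr_deriv ?_
    ring
  -- Step 2: u x t * exp(Dμ t) is monotone on [T₁, T₂]
  have hmono_x : MonotoneOn (fun s => u x s * Real.exp (Dμ * s)) (Set.Icc T₁ T₂) := by
    apply monotoneOn_of_deriv_nonneg (convex_Icc T₁ T₂)
    · exact (Continuous.continuousOn (by
        exact ((hdiff x).continuous.mul (Real.continuous_exp.comp (by continuity)))))
    · intro t _
      exact (hgd x t).differentiableAt.differentiableWithinAt
    · intro t ht
      rw [interior_Icc] at ht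
      have ht0 : (0:ℝ) ≤ t := le_trans hT₁ ht.1.le
      rw [(hgd x t).deriv]
      have := hderiv_ge x x t ht0
      rw [hloop x] at this
      simp only [zero_mul, zero_div, zero_sub] at this
      have : 0 ≤ deriv (u x) t + Dμ * u x t := by linarith
      exact mul_nonneg this (Real.exp_pos _).le
  have hstep2 : ∀ t ∈ Set.Icc T₁ T₂,
      u x T₁ * Real.exp (Dμ * T₁) ≤ u x t * Real.exp (Dμ * t) := by
    intro t ht
    exact hmono_x (Set.left_mem_Icc.mpr hT.le) ht ht.1
  -- Step 3: monotone auxiliary function at y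
  set C : ℝ := (wmin / μmax) * (u x T₁ * Real.exp (Dμ * T₁)) with hC
  have hmono_y : MonotoneOn (fun s => u y s * Real.exp (Dμ * s) - C * s)
      (Set.Icc T₁ T₂) := by
    apply monotoneOn_of_deriv_nonneg (convex_Icc T₁ T₂)
    · exact (Continuous.continuousOn (by
        exact (((hdiff y).continuous.mul (Real.continuous_exp.comp (by continuity))).sub
          (continuous_const.mul continuous_id))))
    · intro t _
      exact (((hgd y t).sub ((hasDerivAt_id t).const_mul C)).differentiableAt).differentiableWithinAt
    · intro t ht
      rw [interior_Icc] at ht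
      have ht0 : (0:ℝ) ≤ t := le_trans hT₁ ht.1.le
      have hd : HasDerivAt (fun s => u y s * Real.exp (Dμ * s) - C * s)
          ((deriv (u y) t + Dμ * u y t) * Real.exp (Dμ * t) - C) t := by
        have := (hgd y t).sub ((hasDerivAt_id t).const_mul C)
        refine this.congr_deriv ?_
        ring
      rw [hd.deriv]
      -- deriv (u y) t + Dμ * u y t ≥ w y x * u x t / μ y ≥ (wmin/μmax) * u x t
      have h1 := hderiv_ge y x t ht0
      have h2 : (wmin / μmax) * u x t ≤ w y x * u x t / μ y := by
        rw [mul_comm (wmin / μmax), mul_comm (w y x), mul_div_assoc]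
        exact mul_le_mul_of_nonneg_left
          (div_le_div₀ (hw y x) hwmin_le (hμ y) (hμmax_ge y)) (hu x t).le
      have h3 : (wmin / μmax) * (u x T₁ * Real.exp (Dμ * T₁))
          ≤ (wmin / μmax) * (u x t * Real.exp (Dμ * t)) := by
        apply mul_le_mul_of_nonneg_left _ (div_nonneg hwmin_pos.le hμmax_pos.le)
        exact hstep2 t ⟨ht.1.le, ht.2.le⟩
      have h4 : (wmin / μmax) * u x t ≤ deriv (u y) t + Dμ * u y t := by linarith
      have h5 := mul_le_mul_of_nonneg_right h4 (Real.exp_pos (Dμ * t)).le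
      have h6 : (wmin / μmax) * (u x t * Real.exp (Dμ * t))
          = (wmin / μmax) * u x t * Real.exp (Dμ * t) := by ring
      linarith
  -- Evaluate monotonicity at endpoints
  have hFT : u y T₁ * Real.exp (Dμ * T₁) - C * T₁
      ≤ u y T₂ * Real.exp (Dμ * T₂) - C * T₂ :=
    hmono_y (Set.left_mem_Icc.mpr hT.le) (Set.right_mem_Icc.mpr hT.le) hT.le
  have hpos1 : 0 < u y T₁ * Real.exp (Dμ * T₁) := mul_pos (hu y T₁) (Real.exp_pos _)
  have hmain : C * (T₂ - T₁) ≤ u y T₂ * Real.exp (Dμ * T₂) := by nlinarith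
  -- extract u x T₁ ≤ u y T₂ * (μmax/(wmin Δ)) * exp(Dμ Δ)
  set a : ℝ := μmax / (wmin * (T₂ - T₁)) with ha
  have ha_pos : 0 < a := div_pos hμmax_pos (mul_pos hwmin_pos hΔ)
  have hstep3 : u x T₁ ≤ u y T₂ * (a * Real.exp (Dμ * (T₂ - T₁))) := by
    have hE1 : (0:ℝ) < Real.exp (Dμ * T₁) := Real.exp_pos _
    have hexpeq : Real.exp (Dμ * T₂) = Real.exp (Dμ * (T₂ - T₁)) * Real.exp (Dμ * T₁) := by
      rw [← Real.exp_add]; ring_nf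
    rw [hC, hexpeq] at hmain
    have h' : wmin / μmax * u x T₁ * (T₂ - T₁) ≤ u y T₂ * Real.exp (Dμ * (T₂ - T₁)) := by
      rw [← mul_le_mul_iff_of_pos_right hE1]
      calc (wmin / μmax * u x T₁ * (T₂ - T₁)) * Real.exp (Dμ * T₁)
          = wmin / μmax * (u x T₁ * Real.exp (Dμ * T₁)) * (T₂ - T₁) := by ring
        _ ≤ u y T₂ * (Real.exp (Dμ * (T₂ - T₁)) * Real.exp (Dμ * T₁)) := hmain
        _ = (u y T₂ * Real.exp (Dμ * (T₂ - T₁))) * Real.exp (Dμ * T₁) := by ring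
    have heq : u x T₁ = (wmin / μmax * u x T₁ * (T₂ - T₁)) * a := by
      rw [ha]; field_simp
    rw [heq]
    calc (wmin / μmax * u x T₁ * (T₂ - T₁)) * a
        ≤ (u y T₂ * Real.exp (Dμ * (T₂ - T₁))) * a :=
          mul_le_mul_of_nonneg_right h' ha_pos.le
      _ = u y T₂ * (a * Real.exp (Dμ * (T₂ - T₁))) := by ring
  -- Step 4: bound the constant
  have hconst : a * Real.exp (Dμ * (T₂ - T₁))
      ≤ Real.exp (2 * Dμ * (T₂ - T₁) + (4 * μmax / wmin) * (1 / (T₂ - T₁))) := by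
    have h4a : (4 * μmax / wmin) * (1 / (T₂ - T₁)) = 4 * a := by
      rw [ha]; field_simp
    have hae : a ≤ Real.exp (Dμ * (T₂ - T₁) + 4 * a) := by
      have h1 : a ≤ a + 1 := by linarith
      have h2 : a + 1 ≤ Real.exp a := Real.add_one_le_exp a
      have h3 : Real.exp a ≤ Real.exp (Dμ * (T₂ - T₁) + 4 * a) := by
        apply Real.exp_le_exp.mpr
        nlinarith
      linarith
    calc a * Real.exp (Dμ * (T₂ - T₁))
        ≤ Real.exp (Dμ * (T₂ - T₁) + 4 * a) * Real.exp (Dμ * (T₂ - T₁)) :=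
          mul_le_mul_of_nonneg_right hae (Real.exp_pos _).le
      _ = Real.exp (2 * Dμ * (T₂ - T₁) + (4 * μmax / wmin) * (1 / (T₂ - T₁))) := by
          rw [← Real.exp_add, h4a]; ring_nf
  calc u x T₁ ≤ u y T₂ * (a * Real.exp (Dμ * (T₂ - T₁))) := hstep3
    _ ≤ u y T₂ * Real.exp (2 * Dμ * (T₂ - T₁) + (4 * μmax / wmin) * (1 / (T₂ - T₁))) :=
        mul_le_mul_of_nonneg_left hconst (hu y T₂).le
end

section
/- Assume the weights are symmetric (w(x,y) = w(y,x)) and the graph with adjacency x ∼ y iff x ≠ y and w(x,y) > 0 is connected. Let p : (0,∞) × V × V → ℝ be a positive function such that for each fixed y ∈ V: (a) t ↦ p(t,x,y) is differentiable and ∂_t p(t,x,y) = Δ_x p(t,·,y)(x) for all x ∈ V and t > 0, and (b) ∑_{z∈V} μ(z) p(t,z,y) ≤ 1 for all t > 0. Then for every t > 0 and all x, y ∈ V: p(t,x,y) ≤ (1/Vol(B(x,√t))) · exp{ 4√(2 D_μ μ_max t / w_min) }, where Vol(B(x,r)) = ∑_{z : dist(x,z) ≤ r} μ(z) and dist is the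 graph distance. -/
open Finset

open scoped Classical in
/-- The volume of the ball `B(x,r)` with respect to the measure `μ` and the graph
distance of `G`: `Vol(B(x,r)) = ∑_{z : dist(x,z) ≤ r} μ(z)`. -/
noncomputable def volBall {V : Type*} [Fintype V] (G : SimpleGraph V) (μ : V → ℝ)
    (x : V) (r : ℝ) : ℝ :=
  ∑ z ∈ Finset.univ.filter (fun z => (G.dist x z : ℝ) ≤ r), μ z

/-- A lower bound on increments from a lower bound on the derivative. -/
lemma deriv_lower_bound {f f' : ℝ → ℝ} {m a b : ℝ} (hab : a ≤ b)
    (hd : ∀ u ∈ Set.Icc a b, HasDerivAt f (f' u) u)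
    (hm : ∀ u ∈ Set.Icc a b, m ≤ f' u) :
    m * (b - a) ≤ f b - f a := by
  have H : MonotoneOn (fun u => f u - m * u) (Set.Icc a b) := by
    have hd' : ∀ u ∈ Set.Icc a b, HasDerivAt (fun u => f u - m * u) (f' u - m) u := by
      intro u hu
      exact ((hd u hu).sub ((hasDerivAt_id u).const_mul m)).congr_deriv (by ring)
    apply monotoneOn_of_deriv_nonneg (convex_Icc a b)
    · exact fun u hu => (hd' u hu).continuousAt.continuousWithinAt
    · intro u hu
      exact (hd' u (interior_subset hu)).differentiableAt.differentiableWithinAt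
    · intro u hu
      rw [(hd' u (interior_subset hu)).deriv]
      linarith [hm u (interior_subset hu)]
  have h2 := H (Set.left_mem_Icc.2 hab) (Set.right_mem_Icc.2 hab) hab
  simp only [] at h2
  linarith
set_option maxHeartbeats 1000000 in
/-- Upper bound for the heat kernel: if `p` is positive, solves the heat equation in
`(t,x)` and satisfies `∑_z μ(z) p(t,z,y) ≤ 1`, then
`p(t,x,y) ≤ (1/Vol(B(x,√t))) exp{4√(2D_μ μ_max t / w_min)}`. -/
theorem heat_kernel_upper_bound {V : Type*} [Fintype V] [Nonempty V]
    (w : V → V → ℝ) (hw : ∀ x y, 0 ≤ w x y) (hloop : ∀ x, w x x = 0)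
    (hsymm : ∀ x y, w x y = w y x)
    (μ : V → ℝ) (hμ : ∀ x, 0 < μ x)
    (G : SimpleGraph V) (hadj : ∀ x y, G.Adj x y ↔ x ≠ y ∧ 0 < w x y)
    (hconn : G.Connected)
    (Dμ μmax wmin : ℝ)
    (hDμ : Dμ = Finset.univ.sup' Finset.univ_nonempty (fun z => (∑ y, w z y) / μ z))
    (hμmax : μmax = Finset.univ.sup' Finset.univ_nonempty μ)
    (hwmin : IsLeast {r : ℝ | ∃ x y, 0 < w x y ∧ w x y = r} wmin)
    (p : ℝ → V → V → ℝ)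
    (hpos : ∀ t, 0 < t → ∀ x y, 0 < p t x y)
    (hheat : ∀ y x t, 0 < t →
      HasDerivAt (fun s => p s x y) (graphLap w μ (fun z => p t z y) x) t)
    (hmass : ∀ y t, 0 < t → (∑ z, μ z * p t z y) ≤ 1)
    (t : ℝ) (ht : 0 < t) (x y : V) :
    p t x y ≤ (1 / volBall G μ x (Real.sqrt t))
      * Real.exp (4 * Real.sqrt (2 * Dμ * μmax * t / wmin)) := by
  classical
  obtain ⟨⟨x₀, y₀, hx₀pos, hx₀eq⟩, hwlb⟩ := hwmin
  have hwmin_pos : 0 < wmin := hx₀eq ▸ hx₀pos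
  have hwminle : ∀ u v : V, 0 < w u v → wmin ≤ w u v := fun u v h => hwlb ⟨u, v, h, rfl⟩
  have hμmax_pos : 0 < μmax := by
    rw [hμmax]
    exact lt_of_lt_of_le (hμ (Classical.arbitrary V)) (Finset.le_sup' μ (mem_univ _))
  have hμle : ∀ z, μ z ≤ μmax := fun z => hμmax ▸ Finset.le_sup' μ (mem_univ z)
  have hDle : ∀ z, (∑ y, w z y) / μ z ≤ Dμ := fun z =>
    hDμ ▸ Finset.le_sup' (fun z => (∑ y, w z y) / μ z) (mem_univ z)
  have hD_pos : 0 < Dμ := by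
    refine lt_of_lt_of_le ?_ (hDle x₀)
    exact div_pos (lt_of_lt_of_le hx₀pos
      (Finset.single_le_sum (fun i _ => hw x₀ i) (mem_univ y₀))) (hμ x₀)
  -- Lower bound on the Laplacian: Δp ≥ -Dμ p
  have hLap_ge : ∀ (y' x' : V) (u : ℝ), 0 < u →
      -(Dμ * p u x' y') ≤ graphLap w μ (fun z => p u z y') x' := by
    intro y' x' u hu
    have hsplit : graphLap w μ (fun z => p u z y') x'
        = (1 / μ x') * (∑ z, w x' z * p u z y')
          - ((∑ z, w x' z) / μ x') * p u x' y' := by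
      unfold graphLap
      rw [show (∑ z, w x' z * (p u z y' - p u x' y'))
          = (∑ z, w x' z * p u z y') - (∑ z, w x' z) * p u x' y' by
        rw [Finset.sum_mul]
        rw [← Finset.sum_sub_distrib]
        exact Finset.sum_congr rfl fun z _ => by ring]
      ring
    rw [hsplit]
    have h1 : 0 ≤ (1 / μ x') * (∑ z, w x' z * p u z y') := by
      apply mul_nonneg (one_div_nonneg.2 (hμ x').le)
      exact Finset.sum_nonneg fun z _ => mul_nonneg (hw x' z) (hpos u hu z y').le
    have h2 : ((∑ z, w x' z) / μ x') * p u x' y' ≤ Dμ * p u x' y' :=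
      mul_le_mul_of_nonneg_right (hDle x') (hpos u hu x' y').le
    linarith
  -- Lemma B : slow decay
  have hB : ∀ (x' y' : V) (t₁ t₂ : ℝ), 0 < t₁ → t₁ ≤ t₂ →
      Real.exp (-(Dμ * (t₂ - t₁))) * p t₁ x' y' ≤ p t₂ x' y' := by
    intro x' y' t₁ t₂ ht₁ h12
    have key : (0 : ℝ) * (t₂ - t₁) ≤
        Real.exp (Dμ * t₂) * p t₂ x' y' - Real.exp (Dμ * t₁) * p t₁ x' y' := by
      apply deriv_lower_bound (f := fun u => Real.exp (Dμ * u) * p u x' y')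
        (f' := fun u => Real.exp (Dμ * u) * Dμ * p u x' y'
          + Real.exp (Dμ * u) * graphLap w μ (fun z => p u z y') x') h12
      · intro u hu
        have hu0 : 0 < u := lt_of_lt_of_le ht₁ hu.1
        exact (((hasDerivAt_id u).const_mul Dμ).exp.mul (hheat y' x' u hu0)).congr_deriv (by simp only [id_eq]; ring)
      · intro u hu
        have hu0 : 0 < u := lt_of_lt_of_le ht₁ hu.1
        have := hLap_ge y' x' u hu0
        have hexp : 0 < Real.exp (Dμ * u) := Real.exp_pos _
        nlinarith
    have he : 0 < Real.exp (Dμ * t₂) := Real.exp_pos _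
    rw [show Real.exp (-(Dμ * (t₂ - t₁))) = Real.exp (Dμ * t₁) / Real.exp (Dμ * t₂) by
      rw [← Real.exp_sub]; ring_nf]
    rw [div_mul_eq_mul_div, div_le_iff₀ he]
    nlinarith
  -- constants
  obtain ⟨b, hb⟩ : ∃ r : ℝ, r = Dμ * μmax / wmin := ⟨_, rfl⟩
  have hb_pos : 0 < b := hb ▸ div_pos (mul_pos hD_pos hμmax_pos) hwmin_pos
  obtain ⟨a, ha⟩ : ∃ r : ℝ, r = Real.sqrt (2 * b) := ⟨_, rfl⟩
  have ha_pos : 0 < a := ha ▸ Real.sqrt_pos.2 (by linarith)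
  have ha_sq : a ^ 2 = 2 * b := by rw [ha]; exact Real.sq_sqrt (by linarith)
  obtain ⟨s, hs⟩ : ∃ r : ℝ, r = μmax / wmin * Real.exp (-a) := ⟨_, rfl⟩
  have hs_pos : 0 < s := hs ▸ mul_pos (div_pos hμmax_pos hwmin_pos) (Real.exp_pos _)
  have hDs : Dμ * s = b * Real.exp (-a) := by rw [hs, hb]; ring
  obtain ⟨c₀, hc₀⟩ : ∃ r : ℝ, r = Real.exp (-(a + Dμ * s)) := ⟨_, rfl⟩
  have hc₀_pos : 0 < c₀ := hc₀ ▸ Real.exp_pos _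
  have hc₀eq : c₀ = wmin / μmax * s * Real.exp (-(Dμ * s)) := by
    have hws : wmin / μmax * s = Real.exp (-a) := by
      rw [hs]; field_simp
    calc c₀ = Real.exp (-a) * Real.exp (-(Dμ * s)) := by
          rw [hc₀, ← Real.exp_add]; congr 1; ring
      _ = wmin / μmax * s * Real.exp (-(Dμ * s)) := by rw [hws]
  -- Lemma A : one step along an edge
  have hA : ∀ u v : V, G.Adj u v → ∀ τ : ℝ, 0 < τ → c₀ * p τ u y ≤ p (τ + s) v y := by
    intro u v huv τ hτ
    have hwuv : 0 < w v u := by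
      rw [hsymm]; exact ((hadj u v).1 huv).2
    have hm : ∀ ξ ∈ Set.Icc τ (τ + s),
        Real.exp (Dμ * τ) * (wmin / μmax) * p τ u y ≤
          Real.exp (Dμ * ξ) * Dμ * p ξ v y
          + Real.exp (Dμ * ξ) * graphLap w μ (fun z => p ξ z y) v := by
      intro ξ hξ
      have hξ0 : 0 < ξ := lt_of_lt_of_le hτ hξ.1
      have hLap2 : (w v u / μ v) * p ξ u y - Dμ * p ξ v y
          ≤ graphLap w μ (fun z => p ξ z y) v := by
        have hsplit : graphLap w μ (fun z => p ξ z y) v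
            = (1 / μ v) * (∑ z, w v z * p ξ z y)
              - ((∑ z, w v z) / μ v) * p ξ v y := by
          unfold graphLap
          rw [show (∑ z, w v z * (p ξ z y - p ξ v y))
              = (∑ z, w v z * p ξ z y) - (∑ z, w v z) * p ξ v y by
            rw [Finset.sum_mul, ← Finset.sum_sub_distrib]
            exact Finset.sum_congr rfl fun z _ => by ring]
          ring
        rw [hsplit]
        have h1 : w v u * p ξ u y ≤ ∑ z, w v z * p ξ z y :=
          Finset.single_le_sum (fun z _ => mul_nonneg (hw v z) (hpos ξ hξ0 z y).le)
            (mem_univ u)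
        have h2 : ((∑ z, w v z) / μ v) * p ξ v y ≤ Dμ * p ξ v y :=
          mul_le_mul_of_nonneg_right (hDle v) (hpos ξ hξ0 v y).le
        have h3 : (w v u / μ v) * p ξ u y ≤ (1 / μ v) * (∑ z, w v z * p ξ z y) := by
          have h1' := mul_le_mul_of_nonneg_left h1 (inv_nonneg.2 (hμ v).le)
          calc (w v u / μ v) * p ξ u y = (μ v)⁻¹ * (w v u * p ξ u y) := by ring
            _ ≤ (μ v)⁻¹ * ∑ z, w v z * p ξ z y := h1'
            _ = (1 / μ v) * ∑ z, w v z * p ξ z y := by ring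
        linarith
      have hstep1 : (wmin / μmax) * p ξ u y ≤ (w v u / μ v) * p ξ u y := by
        apply mul_le_mul_of_nonneg_right _ (hpos ξ hξ0 u y).le
        apply div_le_div₀ (hw v u) (hwminle v u hwuv) (hμ v) (hμle v)
      have hstep2 :
          Real.exp (-(Dμ * (ξ - τ))) * p τ u y ≤ p ξ u y := hB u y τ ξ hτ hξ.1
      have hexpξ : 0 < Real.exp (Dμ * ξ) := Real.exp_pos _
      have hkey : Real.exp (Dμ * ξ) * Real.exp (-(Dμ * (ξ - τ))) = Real.exp (Dμ * τ) := by
        rw [← Real.exp_add]; ring_nf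
      have hwm_pos : 0 < wmin / μmax := div_pos hwmin_pos hμmax_pos
      have hc1 : Real.exp (Dμ * τ) * (wmin / μmax) * p τ u y
          ≤ Real.exp (Dμ * ξ) * ((wmin / μmax) * p ξ u y) := by
        calc Real.exp (Dμ * τ) * (wmin / μmax) * p τ u y
            = Real.exp (Dμ * ξ) * ((wmin / μmax) *
                (Real.exp (-(Dμ * (ξ - τ))) * p τ u y)) := by rw [← hkey]; ring
          _ ≤ Real.exp (Dμ * ξ) * ((wmin / μmax) * p ξ u y) := by
              apply mul_le_mul_of_nonneg_left _ hexpξ.le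
              exact mul_le_mul_of_nonneg_left hstep2 hwm_pos.le
      refine le_trans hc1 ?_
      nlinarith [hpos ξ hξ0 v y, mul_le_mul_of_nonneg_left hstep1 hexpξ.le,
        mul_le_mul_of_nonneg_left hLap2 hexpξ.le, mul_pos hD_pos (hpos ξ hξ0 v y),
        mul_le_mul_of_nonneg_left hLap2 hexpξ.le]
    have key := deriv_lower_bound (f := fun u' => Real.exp (Dμ * u') * p u' v y)
      (f' := fun ξ => Real.exp (Dμ * ξ) * Dμ * p ξ v y
        + Real.exp (Dμ * ξ) * graphLap w μ (fun z => p ξ z y) v)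
      (by linarith : τ ≤ τ + s)
      (fun ξ hξ => (((hasDerivAt_id ξ).const_mul Dμ).exp.mul
        (hheat y v ξ (lt_of_lt_of_le hτ hξ.1))).congr_deriv (by simp only [id_eq]; ring))
      hm
    -- key : m * s ≤ exp(Dμ(τ+s)) p(τ+s) - exp(Dμ τ) p(τ,v)
    have hpv : 0 < Real.exp (Dμ * τ) * p τ v y :=
      mul_pos (Real.exp_pos _) (hpos τ hτ v y)
    have hes : 0 < Real.exp (Dμ * (τ + s)) := Real.exp_pos _
    have hfinal : Real.exp (Dμ * τ) * (wmin / μmax) * p τ u y * s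
        ≤ Real.exp (Dμ * (τ + s)) * p (τ + s) v y := by
      have hkey2 := key
      simp only [add_sub_cancel_left] at hkey2
      linarith
    rw [hc₀eq]
    have hprod : Real.exp (-(Dμ * s)) * Real.exp (Dμ * (τ + s)) = Real.exp (Dμ * τ) := by
      rw [← Real.exp_add]; ring_nf
    have h2 : (wmin / μmax * s * Real.exp (-(Dμ * s)) * p τ u y) * Real.exp (Dμ * (τ + s))
        ≤ (p (τ + s) v y) * Real.exp (Dμ * (τ + s)) := by
      calc (wmin / μmax * s * Real.exp (-(Dμ * s)) * p τ u y) * Real.exp (Dμ * (τ + s))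
          = Real.exp (Dμ * τ) * (wmin / μmax) * p τ u y * s := by
            rw [← hprod]; ring
        _ ≤ Real.exp (Dμ * (τ + s)) * p (τ + s) v y := hfinal
        _ = p (τ + s) v y * Real.exp (Dμ * (τ + s)) := by ring
    exact le_of_mul_le_mul_right h2 hes
  -- chain along walks
  have hchain : ∀ (u v : V) (W : G.Walk u v) (τ : ℝ), 0 < τ →
      c₀ ^ W.length * p τ u y ≤ p (τ + W.length * s) v y := by
    intro u v W
    induction W with
    | nil => intro τ hτ; simp
    | @cons u' v' v'' h W ih =>
        intro τ hτ
        have h1 := hA _ _ h τ hτ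
        have h2 := ih (τ + s) (by linarith)
        have harith : (τ + s) + (W.length : ℝ) * s
            = τ + (((W.length + 1 : ℕ) : ℝ)) * s := by push_cast; ring
        rw [harith] at h2
        calc c₀ ^ (W.cons h).length * p τ u' y
            = c₀ ^ W.length * (c₀ * p τ u' y) := by
              rw [SimpleGraph.Walk.length_cons]; ring
          _ ≤ c₀ ^ W.length * p (τ + s) v' y :=
              mul_le_mul_of_nonneg_left h1 (pow_nonneg hc₀_pos.le _)
          _ ≤ p (τ + ((W.cons h).length : ℝ) * s) v'' y := by
              rw [SimpleGraph.Walk.length_cons]; exact h2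
  obtain ⟨K, hK⟩ : ∃ n : ℕ, n = Nat.floor (Real.sqrt t) := ⟨_, rfl⟩
  obtain ⟨T, hT⟩ : ∃ r : ℝ, r = t + K * s := ⟨_, rfl⟩
  have hTt : t ≤ T := by
    have : (0:ℝ) ≤ K * s := mul_nonneg (Nat.cast_nonneg K) hs_pos.le
    linarith
  have hT0 : 0 < T := lt_of_lt_of_le ht hTt
  -- per-vertex bound in the ball
  have hz : ∀ z : V, (G.dist x z : ℝ) ≤ Real.sqrt t →
      c₀ ^ K * p t x y ≤ p T z y := by
    intro z hz'
    obtain ⟨W, hW⟩ := (hconn x z).exists_walk_length_eq_dist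
    set k := G.dist x z with hk
    have hkK : k ≤ K := by rw [hK]; exact Nat.le_floor hz'
    have hch := hchain x z W t ht
    rw [hW] at hch
    have hpadtime : t + (k : ℝ) * s ≤ T := by
      rw [hT]
      have : (k : ℝ) ≤ (K : ℝ) := Nat.cast_le.2 hkK
      nlinarith
    have hpk0 : 0 < t + (k : ℝ) * s := by
      have : (0:ℝ) ≤ (k : ℝ) * s := mul_nonneg (Nat.cast_nonneg k) hs_pos.le
      linarith
    have hpad := hB z y (t + k * s) T hpk0 hpadtime
    have hTdiff : T - (t + (k : ℝ) * s) = ((K - k : ℕ) : ℝ) * s := by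
      rw [hT, Nat.cast_sub hkK]; ring
    rw [hTdiff] at hpad
    have hc₀le : c₀ ≤ Real.exp (-(Dμ * s)) := by
      rw [hc₀]
      apply Real.exp_le_exp.2
      linarith
    have hexppow : Real.exp (-(Dμ * (((K - k : ℕ) : ℝ) * s)))
        = Real.exp (-(Dμ * s)) ^ (K - k) := by
      rw [← Real.exp_nat_mul]; congr 1; ring
    have hpowle : c₀ ^ (K - k) ≤ Real.exp (-(Dμ * s)) ^ (K - k) :=
      pow_le_pow_left₀ hc₀_pos.le hc₀le _
    calc c₀ ^ K * p t x y = c₀ ^ (K - k) * (c₀ ^ k * p t x y) := by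
          rw [← mul_assoc, ← pow_add, Nat.sub_add_cancel hkK]
      _ ≤ c₀ ^ (K - k) * p (t + k * s) z y :=
          mul_le_mul_of_nonneg_left hch (pow_nonneg hc₀_pos.le _)
      _ ≤ Real.exp (-(Dμ * s)) ^ (K - k) * p (t + k * s) z y :=
          mul_le_mul_of_nonneg_right hpowle (hpos _ hpk0 z y).le
      _ = Real.exp (-(Dμ * (((K - k : ℕ) : ℝ) * s))) * p (t + k * s) z y := by
          rw [hexppow]
      _ ≤ p T z y := hpad
  -- sum over the ball
  obtain ⟨B, hBdef⟩ : ∃ B : Finset V, B = Finset.univ.filter (fun z => (G.dist x z : ℝ) ≤ Real.sqrt t) := ⟨_, rfl⟩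
  have hVeq : volBall G μ x (Real.sqrt t) = ∑ z ∈ B, μ z := by
    rw [hBdef, volBall]
  have hxB : x ∈ B := by
    rw [hBdef]
    simp [SimpleGraph.dist_self, Real.sqrt_nonneg]
  have hVpos : 0 < volBall G μ x (Real.sqrt t) := by
    rw [hVeq]
    exact Finset.sum_pos' (fun z _ => (hμ z).le) ⟨x, hxB, hμ x⟩
  have hsum : volBall G μ x (Real.sqrt t) * (c₀ ^ K * p t x y) ≤ 1 := by
    rw [hVeq, Finset.sum_mul]
    calc ∑ z ∈ B, μ z * (c₀ ^ K * p t x y)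
        ≤ ∑ z ∈ B, μ z * p T z y := by
          apply Finset.sum_le_sum
          intro z hzB
          apply mul_le_mul_of_nonneg_left _ (hμ z).le
          apply hz z
          rw [hBdef] at hzB
          exact (Finset.mem_filter.1 hzB).2
      _ ≤ ∑ z, μ z * p T z y := by
          apply Finset.sum_le_sum_of_subset_of_nonneg
          · rw [hBdef]; exact Finset.filter_subset _ _
          · exact fun z _ _ => mul_nonneg (hμ z).le (hpos T hT0 z y).le
      _ ≤ 1 := hmass y T hT0
  -- the exponential comparison
  have hEeq : Real.sqrt (2 * Dμ * μmax * t / wmin) = a * Real.sqrt t := by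
    rw [ha, ← Real.sqrt_mul (by linarith : (0:ℝ) ≤ 2 * b)]
    congr 1
    rw [hb]; ring
  have hDsle : Dμ * s ≤ a := by
    rw [hDs]
    have h1 : Real.exp (-a) * Real.exp a = 1 := by
      rw [← Real.exp_add]; simp
    have h2 : a + 1 ≤ Real.exp a := Real.add_one_le_exp a
    have h3 : 0 < Real.exp (-a) := Real.exp_pos _
    nlinarith [sq_nonneg a, Real.exp_pos a]
  have hKle : (K : ℝ) ≤ Real.sqrt t := by rw [hK]; exact Nat.floor_le (Real.sqrt_nonneg t)
  have hexp1 : 1 ≤ c₀ ^ K * Real.exp (4 * Real.sqrt (2 * Dμ * μmax * t / wmin)) := by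
    rw [hc₀, ← Real.exp_nat_mul, ← Real.exp_add, hEeq]
    rw [show (1:ℝ) = Real.exp 0 by simp]
    apply Real.exp_le_exp.2
    have hst : 0 ≤ Real.sqrt t := Real.sqrt_nonneg t
    nlinarith [mul_le_mul_of_nonneg_right hKle (by nlinarith [mul_pos hD_pos hs_pos] : (0:ℝ) ≤ a + Dμ * s)]
  -- conclude
  rw [div_mul_eq_mul_div, le_div_iff₀ hVpos]
  have hVp : 0 ≤ volBall G μ x (Real.sqrt t) * p t x y :=
    mul_nonneg hVpos.le (hpos t ht x y).le
  nlinarith [mul_le_mul_of_nonneg_left hexp1 hVp,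
    mul_le_mul_of_nonneg_right hsum (Real.exp_pos (4 * Real.sqrt (2 * Dμ * μmax * t / wmin))).le,
    Real.exp_pos (4 * Real.sqrt (2 * Dμ * μmax * t / wmin)), pow_pos hc₀_pos K]
end

section
/- Assume the weights are symmetric (w(x,y) = w(y,x)), every vertex has at least one neighbor (deg(x) > 0 for all x), and the graph with adjacency x ∼ y iff x ≠ y and w(x,y) > 0 is connected. Take the measure μ = deg. Then for every t > 0 and all x, y ∈ V, the heat kernel satisfies the lower bound p(t,x,y) ≥ (1/deg(y)) · exp{ −2t − (4μ_max/w_min) · (dist(x,y))²/t }, where μ_max = max_{x∈V} deg(x), w_min = min{w(x,y) : w(x,y) > 0}, and dist is the graph distance. -/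
open Finset

/-- The iterated random-walk kernels: `p₀(x,y) = δ_{xy}` and
`p_{k+1}(x,z) = ∑_y (w(x,y)/deg(x)) p_k(y,z)`, where `deg(x) = ∑_y w(x,y)`. -/
noncomputable def rwKernel {V : Type*} [Fintype V] [DecidableEq V]
    (w : V → V → ℝ) : ℕ → V → V → ℝ
  | 0 => fun x y => if x = y then 1 else 0
  | (k + 1) => fun x z => ∑ y, (w x y / ∑ y', w x y') * rwKernel w k y z

/-- The heat kernel on a finite weighted graph:
`p(t,x,y) = e^{-t} ∑_k (t^k/k!) p_k(x,y)/deg(y)`. -/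
noncomputable def heatKernel {V : Type*} [Fintype V] [DecidableEq V]
    (w : V → V → ℝ) (t : ℝ) (x y : V) : ℝ :=
  Real.exp (-t) * ∑' k : ℕ, t ^ k / (Nat.factorial k) * rwKernel w k x y / (∑ z, w y z)

section Aux

variable {V : Type*} [Fintype V] [DecidableEq V] {w : V → V → ℝ}

lemma rwKernel_nonneg (hw : ∀ x y, 0 ≤ w x y) (hdeg : ∀ x, 0 < ∑ y, w x y) :
    ∀ (k : ℕ) (x y : V), 0 ≤ rwKernel w k x y := by
  intro k
  induction k with
  | zero => intro x y; simp only [rwKernel]; split <;> norm_num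
  | succ k ih =>
    intro x y
    simp only [rwKernel]
    exact Finset.sum_nonneg fun z _ =>
      mul_nonneg (div_nonneg (hw x z) (hdeg x).le) (ih z y)

lemma rwKernel_sum (hdeg : ∀ x, 0 < ∑ y, w x y) (k : ℕ) (x : V) :
    ∑ z, rwKernel w k x z = 1 := by
  induction k generalizing x with
  | zero => simp [rwKernel]
  | succ k ih =>
    simp only [rwKernel]
    rw [Finset.sum_comm]
    have h : ∀ y : V, ∑ z, (w x y / ∑ y', w x y') * rwKernel w k y z
        = w x y / ∑ y', w x y' := by
      intro y; rw [← Finset.mul_sum, ih y, mul_one]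
    rw [Finset.sum_congr rfl fun y _ => h y, ← Finset.sum_div,
      div_self (hdeg x).ne']

lemma rwKernel_le_one (hw : ∀ x y, 0 ≤ w x y) (hdeg : ∀ x, 0 < ∑ y, w x y)
    (k : ℕ) (x y : V) : rwKernel w k x y ≤ 1 := by
  calc rwKernel w k x y ≤ ∑ z, rwKernel w k x z :=
        Finset.single_le_sum (fun z _ => rwKernel_nonneg hw hdeg k x z) (mem_univ y)
    _ = 1 := rwKernel_sum hdeg k x

lemma rwKernel_walk_le {G : SimpleGraph V}
    (hadj : ∀ x y, G.Adj x y ↔ x ≠ y ∧ 0 < w x y)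
    (hw : ∀ x y, 0 ≤ w x y) (hdeg : ∀ x, 0 < ∑ y, w x y)
    {μmax wmin : ℝ} (hμ : ∀ x, (∑ y, w x y) ≤ μmax) (hμpos : 0 < μmax)
    (hwminpos : 0 < wmin) (hwmin : ∀ x y, 0 < w x y → wmin ≤ w x y)
    {x y : V} (W : G.Walk x y) :
    (wmin / μmax) ^ W.length ≤ rwKernel w W.length x y := by
  induction W with
  | nil => simp [rwKernel]
  | @cons a b c h W ih =>
    have hwab : 0 < w a b := ((hadj a b).mp h).2
    simp only [SimpleGraph.Walk.length_cons, rwKernel]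
    calc (wmin / μmax) ^ (W.length + 1)
        = (wmin / μmax) * (wmin / μmax) ^ W.length := by ring
      _ ≤ (w a b / ∑ y', w a y') * rwKernel w W.length b c := by
          apply mul_le_mul
          · exact div_le_div₀ (hw a b) (hwmin a b hwab) (hdeg a) (hμ a)
          · exact ih
          · positivity
          · exact div_nonneg (hw a b) (hdeg a).le
      _ ≤ ∑ z, (w a z / ∑ y', w a y') * rwKernel w W.length z c := by
          apply Finset.single_le_sum (f := fun z => (w a z / ∑ y', w a y') * rwKernel w W.length z c)
            (fun z _ => mul_nonneg (div_nonneg (hw a z) (hdeg a).le)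
              (rwKernel_nonneg hw hdeg _ z c)) (mem_univ b)

lemma key_ineq {t b m : ℝ} (ht : 0 < t) (hb : 0 < b) (hm : 0 < m) (d : ℕ) :
    Real.exp (-2 * t - (4 * m / b) * (d : ℝ) ^ 2 / t)
      ≤ Real.exp (-t) * (t ^ d / (Nat.factorial d) * (b / m) ^ d) := by
  have key : Real.exp (-t - (4 * m / b) * (d : ℝ) ^ 2 / t)
      ≤ t ^ d / (Nat.factorial d) * (b / m) ^ d := by
    rcases Nat.eq_zero_or_pos d with hd | hd
    · subst hd
      simp only [Nat.cast_zero, pow_zero, Nat.factorial_zero, Nat.cast_one, div_one, mul_one]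
      calc Real.exp (-t - 4 * m / b * 0 ^ 2 / t) = Real.exp (-t) := by norm_num
        _ ≤ Real.exp 0 := Real.exp_le_exp.mpr (by linarith)
        _ = 1 := Real.exp_zero
    · have hd1 : (1 : ℝ) ≤ (d : ℝ) := by exact_mod_cast hd
      have hdpos : (0 : ℝ) < (d : ℝ) := by linarith
      set c : ℝ := t * b / (m * d) with hc
      have hcpos : 0 < c := by positivity
      have h1 : c ^ d ≤ t ^ d / (Nat.factorial d) * (b / m) ^ d := by
        have hfac : (Nat.factorial d : ℝ) ≤ (d : ℝ) ^ d := by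
          exact_mod_cast Nat.factorial_le_pow d
        have hfacpos : (0 : ℝ) < (Nat.factorial d : ℝ) := by
          exact_mod_cast d.factorial_pos
        have e1 : c ^ d = (t * b / m) ^ d / (d : ℝ) ^ d := by
          rw [hc, div_pow, div_pow, mul_pow, mul_pow, div_div]
        have e2 : t ^ d / (Nat.factorial d) * (b / m) ^ d
            = (t * b / m) ^ d / (Nat.factorial d) := by
          rw [div_pow, div_pow, mul_pow]; ring
        rw [e1, e2]
        exact div_le_div_of_nonneg_left (by positivity) hfacpos hfac
      refine le_trans ?_ h1
      have hcd : c ^ d = Real.exp ((d : ℝ) * Real.log c) := by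
        rw [Real.exp_nat_mul, Real.exp_log hcpos]
      rw [hcd, Real.exp_le_exp]
      have hinv : Real.log c = - Real.log (m * d / (t * b)) := by
        rw [← Real.log_inv]; congr 1
        rw [inv_div]
      have hlog : Real.log (m * d / (t * b)) ≤ m * d / (t * b) - 1 :=
        Real.log_le_sub_one_of_pos (by positivity)
      have hmul : (d : ℝ) * Real.log (m * d / (t * b))
          ≤ (d : ℝ) * (m * d / (t * b) - 1) :=
        mul_le_mul_of_nonneg_left hlog (by positivity)
      have e3 : (4 * m / b) * (d : ℝ) ^ 2 / t = 4 * (m * (d : ℝ) ^ 2 / (t * b)) := by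
        field_simp
      have e4 : (d : ℝ) * (m * d / (t * b)) = m * (d : ℝ) ^ 2 / (t * b) := by
        field_simp
      have hu : 0 ≤ m * (d : ℝ) ^ 2 / (t * b) := by positivity
      rw [hinv]
      nlinarith [hmul]
  calc Real.exp (-2 * t - (4 * m / b) * (d : ℝ) ^ 2 / t)
      = Real.exp (-t) * Real.exp (-t - (4 * m / b) * (d : ℝ) ^ 2 / t) := by
        rw [← Real.exp_add]; ring_nf
    _ ≤ Real.exp (-t) * (t ^ d / (Nat.factorial d) * (b / m) ^ d) :=
        mul_le_mul_of_nonneg_left key (Real.exp_nonneg _)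

end Aux

/-- Lower bound for the heat kernel on a finite connected weighted graph with
measure `μ = deg`: for all `t > 0`,
`p(t,x,y) ≥ (1/deg(y)) exp{-2t - (4μ_max/w_min) dist(x,y)²/t}`,
where `μ_max = max_x deg(x)` and `w_min = min{w(x,y) : w(x,y) > 0}`. -/
theorem heat_kernel_lower_bound {V : Type*} [Fintype V] [Nonempty V] [DecidableEq V]
    (w : V → V → ℝ) (hw : ∀ x y, 0 ≤ w x y) (hloop : ∀ x, w x x = 0)
    (hsymm : ∀ x y, w x y = w y x)
    (hdeg : ∀ x, 0 < ∑ y, w x y)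
    (G : SimpleGraph V) (hadj : ∀ x y, G.Adj x y ↔ x ≠ y ∧ 0 < w x y)
    (hconn : G.Connected)
    (μmax wmin : ℝ)
    (hμmax : μmax = Finset.univ.sup' Finset.univ_nonempty (fun x => ∑ y, w x y))
    (hwmin : IsLeast {r : ℝ | ∃ x y, 0 < w x y ∧ w x y = r} wmin)
    (t : ℝ) (ht : 0 < t) (x y : V) :
    heatKernel w t x y ≥ (1 / (∑ z, w y z))
      * Real.exp (-2 * t - (4 * μmax / wmin) * (G.dist x y : ℝ) ^ 2 / t) := by
  obtain ⟨⟨x0, y0, hx0pos, hx0eq⟩, hlb⟩ := hwmin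
  have hwminpos : 0 < wmin := hx0eq ▸ hx0pos
  have hwmin' : ∀ a b, 0 < w a b → wmin ≤ w a b := fun a b h => hlb ⟨a, b, h, rfl⟩
  have hμ : ∀ a, (∑ z, w a z) ≤ μmax := fun a =>
    hμmax ▸ Finset.le_sup' (fun x => ∑ y, w x y) (mem_univ a)
  have hμpos : 0 < μmax := lt_of_lt_of_le (hdeg x0) (hμ x0)
  obtain ⟨W, hW⟩ := hconn.exists_walk_length_eq_dist x y
  set d : ℕ := G.dist x y with hdd
  have hpd : (wmin / μmax) ^ d ≤ rwKernel w d x y := by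
    rw [← hW]
    exact rwKernel_walk_le hadj hw hdeg hμ hμpos hwminpos hwmin' W
  set Dy : ℝ := ∑ z, w y z with hDy
  have hDypos : 0 < Dy := hdeg y
  set f : ℕ → ℝ := fun k => t ^ k / (Nat.factorial k) * rwKernel w k x y / Dy with hf
  have hfnn : ∀ k, 0 ≤ f k := fun k => by
    have := rwKernel_nonneg hw hdeg k x y
    positivity
  have hsum : Summable f := by
    refine Summable.of_nonneg_of_le hfnn (fun k => ?_)
      ((Real.summable_pow_div_factorial t).div_const Dy)
    have h1 : rwKernel w k x y ≤ 1 := rwKernel_le_one hw hdeg k x y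
    have h0 : 0 ≤ rwKernel w k x y := rwKernel_nonneg hw hdeg k x y
    have ht' : (0:ℝ) ≤ t ^ k / (Nat.factorial k) := by positivity
    simp only [hf]
    gcongr
    calc t ^ k / (Nat.factorial k) * rwKernel w k x y
        ≤ t ^ k / (Nat.factorial k) * 1 := by gcongr
      _ = t ^ k / (Nat.factorial k) := mul_one _
  have hterm : f d ≤ ∑' k, f k := Summable.le_tsum hsum d fun j _ => hfnn j
  calc (1 / Dy) * Real.exp (-2 * t - (4 * μmax / wmin) * (d : ℝ) ^ 2 / t)
      ≤ (1 / Dy) * (Real.exp (-t) * (t ^ d / (Nat.factorial d) * (wmin / μmax) ^ d)) := by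
        apply mul_le_mul_of_nonneg_left (key_ineq ht hwminpos hμpos d) (by positivity)
    _ ≤ (1 / Dy) * (Real.exp (-t) * (t ^ d / (Nat.factorial d) * rwKernel w d x y)) := by
        have ht' : (0:ℝ) ≤ t ^ d / (Nat.factorial d) := by positivity
        gcongr
    _ = Real.exp (-t) * f d := by rw [hf]; ring
    _ ≤ Real.exp (-t) * ∑' k, f k :=
        mul_le_mul_of_nonneg_left hterm (Real.exp_nonneg _)
    _ = heatKernel w t x y := rfl
end

section
/- Assume the weights are symmetric (w(x,y) = w(y,x)), every vertex has at least one neighbor (deg(x) > 0 for all x), and the graph with adjacency x ∼ y iff x ≠ y and w(x,y) > 0 is connected. Take the measure μ = deg and set Vol(B(y,r)) = ∑_{z : dist(y,z) ≤ r} deg(z), where dist is the graph distance. Then for every y ∈ V and every t > 0: Vol(B(y,√t)) ≤ Vol(B(y,1)) · exp{ t + 4√(2 μ_max t / w_min) }, where μ_max = max_{x∈V} deg(x) and w_min = min{w(x,y) : w(x,y) > 0}. -/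
open Finset

open scoped Classical in
/-- The volume of the ball `B(y,r)` with respect to the measure `μ = deg` and the
graph distance of `G`: `Vol(B(y,r)) = ∑_{z : dist(y,z) ≤ r} deg(z)`. -/
noncomputable def volBallDeg {V : Type*} [Fintype V] (G : SimpleGraph V)
    (w : V → V → ℝ) (y : V) (r : ℝ) : ℝ :=
  ∑ z ∈ Finset.univ.filter (fun z => (G.dist y z : ℝ) ≤ r), ∑ y', w z y'

/-- Volume growth of balls on a finite connected weighted graph with `μ = deg`:
`Vol(B(y,√t)) ≤ Vol(B(y,1)) exp{t + 4√(2μ_max t / w_min)}`. -/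
theorem volume_growth {V : Type*} [Fintype V] [Nonempty V]
    (w : V → V → ℝ) (hw : ∀ x y, 0 ≤ w x y) (hloop : ∀ x, w x x = 0)
    (hsymm : ∀ x y, w x y = w y x)
    (hdeg : ∀ x, 0 < ∑ y, w x y)
    (G : SimpleGraph V) (hadj : ∀ x y, G.Adj x y ↔ x ≠ y ∧ 0 < w x y)
    (hconn : G.Connected)
    (μmax wmin : ℝ)
    (hμmax : μmax = Finset.univ.sup' Finset.univ_nonempty (fun x => ∑ y, w x y))
    (hwmin : IsLeast {r : ℝ | ∃ x y, 0 < w x y ∧ w x y = r} wmin)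
    (y : V) (t : ℝ) (ht : 0 < t) :
    volBallDeg G w y (Real.sqrt t)
      ≤ volBallDeg G w y 1 * Real.exp (t + 4 * Real.sqrt (2 * μmax * t / wmin)) := by
  classical
  -- basic facts
  have hwmin_pos : 0 < wmin := by
    obtain ⟨⟨a, b, hpos, heq⟩, -⟩ := hwmin
    exact heq ▸ hpos
  have hwmin_le : ∀ x z, 0 < w x z → wmin ≤ w x z := fun x z h => hwmin.2 ⟨x, z, h, rfl⟩
  have hμ_le : ∀ x, ∑ y', w x y' ≤ μmax := by
    intro x; rw [hμmax]; exact Finset.le_sup' (fun x => ∑ y', w x y') (mem_univ x)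
  have hdeg_ge : ∀ x, wmin ≤ ∑ y', w x y' := by
    intro x
    obtain ⟨z, hz⟩ : ∃ z, 0 < w x z := by
      by_contra h; push_neg at h
      have h1 : ∑ y', w x y' ≤ 0 := Finset.sum_nonpos (fun z _ => h z)
      linarith [hdeg x]
    calc wmin ≤ w x z := hwmin_le x z hz
      _ ≤ ∑ y', w x y' := Finset.single_le_sum (fun i _ => hw x i) (mem_univ z)
  have hμ_pos : 0 < μmax := lt_of_lt_of_le (hdeg (Classical.arbitrary V)) (hμ_le _)
  set D : ℝ := μmax / wmin with hDdef
  have hD1 : 1 ≤ D := (one_le_div hwmin_pos).2 (le_trans (hdeg_ge _) (hμ_le (Classical.arbitrary V)))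
  have hD0 : 0 < D := lt_of_lt_of_le one_pos hD1
  have hμD : μmax = D * wmin := by rw [hDdef, div_mul_cancel₀ _ hwmin_pos.ne']
  -- volumes
  have hvol_nonneg : ∀ r : ℝ, 0 ≤ volBallDeg G w y r := by
    intro r
    exact Finset.sum_nonneg fun z _ => Finset.sum_nonneg fun i _ => hw z i
  have hvol_mono : ∀ r₁ r₂ : ℝ, r₁ ≤ r₂ → volBallDeg G w y r₁ ≤ volBallDeg G w y r₂ := by
    intro r₁ r₂ hr
    apply Finset.sum_le_sum_of_subset_of_nonneg
    · intro z hz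
      simp only [mem_filter] at hz ⊢
      exact ⟨hz.1, le_trans hz.2 hr⟩
    · intro i _ _; exact Finset.sum_nonneg fun j _ => hw i j
  have hvol1 : wmin ≤ volBallDeg G w y 1 := by
    have hy : y ∈ Finset.univ.filter (fun z => (G.dist y z : ℝ) ≤ 1) := by
      simp [SimpleGraph.dist_self]
    calc wmin ≤ ∑ y', w y y' := hdeg_ge y
      _ ≤ volBallDeg G w y 1 :=
        Finset.single_le_sum (fun i _ => Finset.sum_nonneg fun j _ => hw i j) hy
  have hE0 : 0 ≤ t + 4 * Real.sqrt (2 * μmax * t / wmin) := by positivity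
  -- easy case: √t ≤ 1
  rcases le_or_gt (Real.sqrt t) 1 with hst | hst
  · calc volBallDeg G w y (Real.sqrt t) ≤ volBallDeg G w y 1 := hvol_mono _ _ hst
      _ = volBallDeg G w y 1 * 1 := (mul_one _).symm
      _ ≤ volBallDeg G w y 1 * Real.exp (t + 4 * Real.sqrt (2 * μmax * t / wmin)) := by
          apply mul_le_mul_of_nonneg_left _ (hvol_nonneg 1)
          exact Real.one_le_exp hE0
  -- main case
  set S : ℕ → Finset V := fun k => Finset.univ.filter (fun z => G.dist y z = k) with hSdef
  have hNcard : ∀ x : V, ((G.neighborFinset x).card : ℝ) ≤ D := by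
    intro x
    rw [hDdef, le_div_iff₀ hwmin_pos]
    calc ((G.neighborFinset x).card : ℝ) * wmin
        = ∑ _z ∈ G.neighborFinset x, wmin := by rw [Finset.sum_const, nsmul_eq_mul]
      _ ≤ ∑ z ∈ G.neighborFinset x, w x z := Finset.sum_le_sum fun z hz =>
          hwmin_le x z ((hadj x z).1 ((G.mem_neighborFinset x z).1 hz)).2
      _ ≤ ∑ z, w x z := Finset.sum_le_sum_of_subset_of_nonneg (Finset.subset_univ _)
          (fun i _ _ => hw x i)
      _ ≤ μmax := hμ_le x
  have hstep : ∀ k : ℕ, S (k + 1) ⊆ (S k).biUnion (fun x => G.neighborFinset x) := by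
    intro k z hz
    rw [hSdef, mem_filter] at hz
    obtain ⟨-, hzd⟩ := hz
    obtain ⟨p, hp⟩ := (hconn z y).exists_walk_length_eq_dist
    have hlen : p.length = k + 1 := by rw [hp, SimpleGraph.dist_comm, hzd]
    cases p with
    | nil => simp at hlen
    | @cons _ x _ h q =>
      have hqlen : q.length = k := by simpa using hlen
      have h1 : G.dist y x ≤ k := by
        rw [SimpleGraph.dist_comm]; exact hqlen ▸ SimpleGraph.dist_le q
      have hxz : G.dist x z = 1 := SimpleGraph.dist_eq_one_iff_adj.2 h.symm
      have h2 : G.dist y z ≤ G.dist y x + 1 := by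
        calc G.dist y z ≤ G.dist y x + G.dist x z := hconn.dist_triangle
          _ = G.dist y x + 1 := by rw [hxz]
      have hx : G.dist y x = k := by omega
      exact Finset.mem_biUnion.2 ⟨x, by simp [hSdef, hx],
        (G.mem_neighborFinset x z).2 h.symm⟩
  have hScard : ∀ k : ℕ, ((S k).card : ℝ) ≤ D ^ k := by
    intro k
    induction k with
    | zero =>
      have hsub : S 0 ⊆ {y} := by
        intro z hz
        rw [hSdef, mem_filter] at hz
        have := (hconn.dist_eq_zero_iff).1 hz.2
        simp [this.symm]
      have := Finset.card_le_card hsub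
      simp only [Finset.card_singleton] at this
      simpa using (Nat.cast_le (α := ℝ)).2 this
    | succ k ih =>
      calc ((S (k + 1)).card : ℝ)
          ≤ (((S k).biUnion fun x => G.neighborFinset x).card : ℝ) :=
            Nat.cast_le.2 (Finset.card_le_card (hstep k))
        _ ≤ ((∑ x ∈ S k, (G.neighborFinset x).card : ℕ) : ℝ) :=
            Nat.cast_le.2 Finset.card_biUnion_le
        _ = ∑ x ∈ S k, ((G.neighborFinset x).card : ℝ) := by push_cast; ring
        _ ≤ ∑ _x ∈ S k, D := Finset.sum_le_sum fun x _ => hNcard x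
        _ = ((S k).card : ℝ) * D := by rw [Finset.sum_const, nsmul_eq_mul]
        _ ≤ D ^ k * D := mul_le_mul_of_nonneg_right ih (le_of_lt hD0)
        _ = D ^ (k + 1) := (pow_succ D k).symm
  set n : ℕ := ⌊Real.sqrt t⌋₊ with hn
  have hBsub : (Finset.univ.filter (fun z => (G.dist y z : ℝ) ≤ Real.sqrt t)) ⊆
      (Finset.range (n + 1)).biUnion S := by
    intro z hz
    rw [mem_filter] at hz
    have hd : G.dist y z ≤ n := Nat.le_floor hz.2
    exact Finset.mem_biUnion.2 ⟨G.dist y z, Finset.mem_range.2 (by omega),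
      by simp [hSdef]⟩
  have hBcard : ((Finset.univ.filter (fun z => (G.dist y z : ℝ) ≤ Real.sqrt t)).card : ℝ)
      ≤ (n + 1 : ℝ) * D ^ n := by
    calc ((Finset.univ.filter (fun z => (G.dist y z : ℝ) ≤ Real.sqrt t)).card : ℝ)
        ≤ (((Finset.range (n + 1)).biUnion S).card : ℝ) :=
          Nat.cast_le.2 (Finset.card_le_card hBsub)
      _ ≤ ((∑ k ∈ Finset.range (n + 1), (S k).card : ℕ) : ℝ) :=
          Nat.cast_le.2 Finset.card_biUnion_le
      _ = ∑ k ∈ Finset.range (n + 1), ((S k).card : ℝ) := by push_cast; ring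
      _ ≤ ∑ k ∈ Finset.range (n + 1), D ^ k := Finset.sum_le_sum fun k _ => hScard k
      _ ≤ ∑ _k ∈ Finset.range (n + 1), D ^ n := Finset.sum_le_sum fun k hk =>
          pow_le_pow_right₀ hD1 (Nat.lt_succ_iff.1 (Finset.mem_range.1 hk))
      _ = (n + 1 : ℝ) * D ^ n := by rw [Finset.sum_const, Finset.card_range, nsmul_eq_mul]; push_cast; ring
  have hvolt : volBallDeg G w y (Real.sqrt t) ≤ (n + 1 : ℝ) * D ^ n * μmax := by
    calc volBallDeg G w y (Real.sqrt t)
        ≤ ∑ _z ∈ Finset.univ.filter (fun z => (G.dist y z : ℝ) ≤ Real.sqrt t), μmax :=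
          Finset.sum_le_sum fun z _ => hμ_le z
      _ = ((Finset.univ.filter (fun z => (G.dist y z : ℝ) ≤ Real.sqrt t)).card : ℝ) * μmax := by
          rw [Finset.sum_const, nsmul_eq_mul]
      _ ≤ (n + 1 : ℝ) * D ^ n * μmax := mul_le_mul_of_nonneg_right hBcard (le_of_lt hμ_pos)
  -- numeric inequality
  set s : ℝ := Real.sqrt t with hs
  have hs1 : 1 < s := hst
  have hs0 : 0 < s := lt_trans one_pos hs1
  have hssq : s ^ 2 = t := Real.sq_sqrt (le_of_lt ht)
  have hns : (n : ℝ) ≤ s := Nat.floor_le (le_of_lt hs0)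
  have hlogD : Real.log D ≤ 2 * Real.sqrt D := by
    have hsd : 0 < Real.sqrt D := Real.sqrt_pos.2 hD0
    have h1 : Real.log (Real.sqrt D) ≤ Real.sqrt D - 1 := Real.log_le_sub_one_of_pos hsd
    have h2 : Real.log (Real.sqrt D) = Real.log D / 2 := Real.log_sqrt hD0.le
    nlinarith [hsd]
  have hlog0 : 0 ≤ Real.log D := Real.log_nonneg hD1
  have hsqrtD : Real.sqrt (D * t) = Real.sqrt D * s := by
    rw [Real.sqrt_mul hD0.le]
  have h1 : ((n : ℝ) + 1) ≤ 2 * s := by linarith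
  have h2s : 2 * s ≤ Real.exp t := by nlinarith [Real.add_one_le_exp t]
  have h3 : D ^ (n + 1) = Real.exp ((↑(n + 1) : ℝ) * Real.log D) := by
    rw [Real.exp_nat_mul, Real.exp_log hD0]
  have h4 : ((↑(n + 1) : ℝ)) * Real.log D ≤ 4 * Real.sqrt (D * t) := by
    calc ((↑(n + 1) : ℝ)) * Real.log D ≤ (2 * s) * (2 * Real.sqrt D) := by
          apply mul_le_mul _ hlogD hlog0 (by positivity)
          push_cast; linarith
      _ = 4 * (Real.sqrt D * s) := by ring
      _ = 4 * Real.sqrt (D * t) := by rw [hsqrtD]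
  have hDpow : ((n : ℝ) + 1) * D ^ (n + 1) ≤ Real.exp (t + 4 * Real.sqrt (D * t)) := by
    calc ((n : ℝ) + 1) * D ^ (n + 1)
        ≤ Real.exp t * Real.exp (4 * Real.sqrt (D * t)) := by
          apply mul_le_mul (h1.trans h2s) _ (by positivity) (Real.exp_pos t).le
          rw [h3]; exact Real.exp_le_exp.2 h4
      _ = Real.exp (t + 4 * Real.sqrt (D * t)) := (Real.exp_add _ _).symm
  have harg : 2 * μmax * t / wmin = 2 * (D * t) := by
    rw [hμD]; field_simp
  have hexpmono : Real.exp (t + 4 * Real.sqrt (D * t))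
      ≤ Real.exp (t + 4 * Real.sqrt (2 * μmax * t / wmin)) := by
    apply Real.exp_le_exp.2
    have : Real.sqrt (D * t) ≤ Real.sqrt (2 * (D * t)) :=
      Real.sqrt_le_sqrt (by nlinarith)
    rw [harg]; linarith
  calc volBallDeg G w y (Real.sqrt t) ≤ (n + 1 : ℝ) * D ^ n * μmax := hvolt
    _ = wmin * (((n : ℝ) + 1) * D ^ (n + 1)) := by rw [hμD, pow_succ]; push_cast; ring
    _ ≤ wmin * Real.exp (t + 4 * Real.sqrt (D * t)) :=
        mul_le_mul_of_nonneg_left hDpow hwmin_pos.le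
    _ ≤ volBallDeg G w y 1 * Real.exp (t + 4 * Real.sqrt (2 * μmax * t / wmin)) :=
        mul_le_mul hvol1 hexpmono (Real.exp_pos _).le (le_trans hwmin_pos.le hvol1)
end
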